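/- For n ≥ 1 and λ ∈ k*, the regular Kronecker representation R_{n,λ} given by (Id_n, J_{n,λ}) where J_{n,λ} is the lower-triangular Jordan block with eigenvalue λ, is not a tree module: every coefficient quiver of R_{n,λ} has 2n vertices and at least 2n edges. -/
import Mathlib

lemma aux_card {k : Type} [Field k] {n : ℕ} (A : Matrix (Fin n) (Fin n) k)
    (hA : IsUnit A) : n ≤ Set.ncard {p : Fin n × Fin n | A p.1 p.2 ≠ 0} := by
  have hrow : ∀ i : Fin n, ∃ j, A i j ≠ 0 := by
    intro i
    by_contra h
    push_neg at h
    have : A.det = 0 := Matrix.det_eq_zero_of_row_eq_zero i h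
    have h2 := (Matrix.isUnit_iff_isUnit_det A).mp hA
    rw [this] at h2
    exact h2.ne_zero rfl
  choose f hf using hrow
  classical
  have hfin : {p : Fin n × Fin n | A p.1 p.2 ≠ 0}.Finite := Set.toFinite _
  have : Set.InjOn (fun i => (i, f i)) Set.univ := by
    intro a _ b _ hab
    exact (Prod.mk.injEq _ _ _ _ ▸ hab).1
  calc n = Set.ncard (Set.univ : Set (Fin n)) := by
        simp [Set.ncard_univ]
    _ ≤ Set.ncard {p : Fin n × Fin n | A p.1 p.2 ≠ 0} := by
        apply Set.ncard_le_ncard_of_injOn (fun i => (i, f i)) _ this hfin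
        intro i _
        exact hf i

theorem stmt_12 {k : Type} [Field k] (n : ℕ) (hn : 1 ≤ n) (lam : k) (hlam : lam ≠ 0)
    (J : Matrix (Fin n) (Fin n) k)
    (hJ : J = Matrix.of fun i j : Fin n =>
      if i = j then lam else if (j : ℕ) + 1 = (i : ℕ) then 1 else 0)
    (g₁ g₂ : Matrix (Fin n) (Fin n) k) (h₁ : IsUnit g₁) (h₂ : IsUnit g₂) :
    Fintype.card (Fin n ⊕ Fin n) = 2 * n ∧
    2 * n ≤ Set.ncard {p : Fin n × Fin n | ((g₂ * 1 * g₁⁻¹ : Matrix (Fin n) (Fin n) k) p.1 p.2) ≠ 0} +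
        Set.ncard {p : Fin n × Fin n | ((g₂ * J * g₁⁻¹ : Matrix (Fin n) (Fin n) k) p.1 p.2) ≠ 0} := by
  have hinv : IsUnit (g₁⁻¹ : Matrix (Fin n) (Fin n) k) :=
    Matrix.isUnit_nonsing_inv_iff.mpr h₁
  have hJtri : J.BlockTriangular OrderDual.toDual := by
    intro i j hij
    simp only [OrderDual.toDual_lt_toDual] at hij
    subst hJ
    simp only [Matrix.of_apply]
    rw [if_neg (by omega), if_neg (by omega)]
  have hJdet : J.det = lam ^ n := by
    rw [Matrix.det_of_lowerTriangular J hJtri]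
    subst hJ
    simp
  have hJunit : IsUnit J := by
    rw [Matrix.isUnit_iff_isUnit_det, hJdet]
    exact (isUnit_iff_ne_zero.mpr (pow_ne_zero n hlam))
  have hA : IsUnit (g₂ * 1 * g₁⁻¹) := by
    rw [mul_one]; exact h₂.mul hinv
  have hB : IsUnit (g₂ * J * g₁⁻¹) := (h₂.mul hJunit).mul hinv
  refine ⟨by simp [two_mul], ?_⟩
  have := aux_card _ hA
  have := aux_card _ hB
  omega
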